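/- arXiv:1710.01958 — 2 statements merged into one kernel-verified Lean document; each statement's English description precedes it below -/
import Mathlib

section
/- Let q be a prime power and p an odd prime dividing |SL₂(F_q)| with p not dividing q. Then every Sylow p-subgroup of SL₂(F_q) is cyclic. -/
open Polynomial Matrix

section Helpers

variable (F : Type) [Field F] [Fintype F]

private lemma SL2aux_det_surj :
    Function.Surjective (Matrix.GeneralLinearGroup.det : GL (Fin 2) F →* Fˣ) := by
  intro v
  refine ⟨⟨Matrix.diagonal ![(v:F), 1], Matrix.diagonal ![((v⁻¹:Fˣ):F), 1], ?_, ?_⟩, ?_⟩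
  · rw [Matrix.diagonal_mul_diagonal]
    ext i j; fin_cases i <;> fin_cases j <;> simp [Matrix.diagonal]
  · rw [Matrix.diagonal_mul_diagonal]
    ext i j; fin_cases i <;> fin_cases j <;> simp [Matrix.diagonal]
  · apply Units.ext
    simp [Matrix.det_diagonal, Fin.prod_univ_two]

private noncomputable def SL2aux_slEquivKer : Matrix.SpecialLinearGroup (Fin 2) F ≃*
    (Matrix.GeneralLinearGroup.det : GL (Fin 2) F →* Fˣ).ker where
  toFun s := ⟨Matrix.SpecialLinearGroup.toGL s, by
    apply Units.ext
    simpa using Matrix.SpecialLinearGroup.coeToGL_det s⟩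
  invFun u := ⟨(u.1 : Matrix (Fin 2) (Fin 2) F), by
    have := congrArg Units.val u.2
    simpa using this⟩
  left_inv s := rfl
  right_inv u := by
    apply Subtype.ext; apply Units.ext; rfl
  map_mul' a b := Subtype.ext (map_mul Matrix.SpecialLinearGroup.toGL a b)

private lemma SL2aux_card : Nat.card (Matrix.SpecialLinearGroup (Fin 2) F) =
    Fintype.card F * (Fintype.card F - 1) * (Fintype.card F + 1) := by
  classical
  set q := Fintype.card F with hq
  have hq2 : 2 ≤ q := Fintype.one_lt_card
  have h1 : Nat.card (GL (Fin 2) F) =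
      Nat.card ((Matrix.GeneralLinearGroup.det : GL (Fin 2) F →* Fˣ).ker) * Nat.card Fˣ := by
    rw [← Nat.card_congr (QuotientGroup.quotientKerEquivOfSurjective _
      (SL2aux_det_surj F)).toEquiv]
    rw [Subgroup.card_eq_card_quotient_mul_card_subgroup
      (Matrix.GeneralLinearGroup.det : GL (Fin 2) F →* Fˣ).ker, mul_comm]
  rw [Nat.card_congr (SL2aux_slEquivKer F).toEquiv]
  have hGL := Matrix.card_GL_field (𝔽 := F) 2
  have hu : Nat.card Fˣ = q - 1 := by
    rw [Nat.card_eq_fintype_card, Fintype.card_units]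
  have hexp : ∏ i : Fin 2, (q ^ 2 - q ^ (i : ℕ)) = (q^2 - 1) * (q^2 - q) := by
    simp [Fin.prod_univ_two]
  rw [hGL, hu, hexp] at h1
  have key : (q^2 - 1) * (q^2 - q) = (q * (q-1) * (q+1)) * (q-1) := by
    have h1q : 1 ≤ q := le_trans (by norm_num) hq2
    have hqq : q ≤ q^2 := Nat.le_self_pow (by norm_num) q
    have h1qq : 1 ≤ q^2 := le_trans h1q hqq
    zify [h1q, hqq, h1qq]
    ring
  rw [key] at h1
  exact Nat.eq_of_mul_eq_mul_right (by omega) h1.symm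

private lemma SL2aux_card_bigK :
    Nat.card (SplittingField (X ^ (Fintype.card F ^ 2) - X : F[X])) = Fintype.card F ^ 2 := by
  classical
  set q := Fintype.card F with hq
  obtain ⟨k, hp₀, hcard⟩ := FiniteField.card F (ringChar F)
  set p₀ := ringChar F with hp₀def
  haveI : Fact p₀.Prime := ⟨hp₀⟩
  set K := SplittingField (X ^ (q^2) - X : F[X]) with hK
  haveI : Finite K := Module.finite_of_finite F
  have hq2 : q^2 = p₀ ^ (2*(k:ℕ)) := by rw [hq, hcard]; ring
  have haq : ∀ a : F, a ^ (q^2) = a := fun a => by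
    rw [hq]; exact FiniteField.pow_card_pow 2 a
  haveI : CharP K p₀ := charP_of_injective_algebraMap (algebraMap F K).injective p₀
  have hpq : p₀ ∣ q^2 := by
    rw [hq2]; exact dvd_pow_self _ (by positivity)
  have hsep : (X ^ (q^2) - X : F[X]).Separable := galois_poly_separable p₀ (q^2) hpq
  have hne : (X ^ (q^2) - X : F[X]) ≠ 0 := by
    rw [hq2]
    exact FiniteField.X_pow_card_pow_sub_X_ne_zero _ (by positivity) hp₀.one_lt
  have hdeg : (X ^ (q^2) - X : F[X]).natDegree = q^2 := by
    rw [hq2]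
    exact FiniteField.X_pow_card_pow_sub_X_natDegree_eq _ (by positivity) hp₀.one_lt
  have hroots : Fintype.card ((X ^ (q^2) - X : F[X]).rootSet K) = q^2 := by
    rw [card_rootSet_eq_natDegree hsep (SplittingField.splits _), hdeg]
  have hcomm : ∀ a : F,
      (iterateFrobenius K p₀ (2*(k:ℕ))) (algebraMap F K a) = algebraMap F K a := by
    intro a
    rw [iterateFrobenius_def, ← hq2, ← map_pow, haq]
  let φ : K →ₐ[F] K := { iterateFrobenius K p₀ (2*(k:ℕ)) with commutes' := hcomm }
  have hsub : (X ^ (q^2) - X : F[X]).rootSet K ⊆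
      (AlgHom.equalizer φ (AlgHom.id F K) : Set K) := by
    intro x hx
    rw [mem_rootSet] at hx
    have hx2 := hx.2
    simp only [map_sub, map_pow, aeval_X, sub_eq_zero] at hx2
    show φ x = x
    show (iterateFrobenius K p₀ (2*(k:ℕ))) x = x
    rw [iterateFrobenius_def, ← hq2, hx2]
  have hEtop : AlgHom.equalizer φ (AlgHom.id F K) = ⊤ := by
    have hadj := SplittingField.adjoin_rootSet (X ^ (q^2) - X : F[X])
    rw [eq_top_iff, ← hadj]
    exact Algebra.adjoin_le hsub
  have hall : ∀ x : K, x ^ (q^2) = x := by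
    intro x
    have hx : x ∈ AlgHom.equalizer φ (AlgHom.id F K) := hEtop ▸ Algebra.mem_top
    have h2 : (iterateFrobenius K p₀ (2*(k:ℕ))) x = x := hx
    rw [iterateFrobenius_def, ← hq2] at h2
    exact h2
  have huniv : (X ^ (q^2) - X : F[X]).rootSet K = Set.univ := by
    rw [Set.eq_univ_iff_forall]
    intro x
    rw [mem_rootSet]
    refine ⟨hne, ?_⟩
    simp [hall x]
  have h1 : Nat.card ((X ^ (q^2) - X : F[X]).rootSet K) = q^2 := by
    rw [Nat.card_eq_fintype_card, hroots]
  rw [← h1, huniv]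
  exact (Nat.card_congr (Equiv.Set.univ K)).symm

private lemma SL2aux_exists_orderOf {G : Type*} [Group G] [Finite G] [IsCyclic G] {d : ℕ}
    (hd : d ∣ Nat.card G) : ∃ g : G, orderOf g = d := by
  obtain ⟨g, hg⟩ := IsCyclic.exists_ofOrder_eq_natCard (α := G)
  have hN : Nat.card G ≠ 0 := Nat.card_pos.ne'
  refine ⟨g ^ (Nat.card G / d), ?_⟩
  rw [orderOf_pow, hg]
  have h1 : Nat.gcd (Nat.card G) (Nat.card G / d) = Nat.card G / d :=
    Nat.gcd_eq_right (Nat.div_dvd_of_dvd hd)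
  rw [h1]
  exact Nat.div_div_self hd hN

/-- The diagonal embedding of `Fˣ` into `SL₂(F)`. -/
private def SL2aux_diagHom : Fˣ →* Matrix.SpecialLinearGroup (Fin 2) F where
  toFun u := ⟨Matrix.diagonal ![(u:F), ((u⁻¹:Fˣ):F)], by
    rw [Matrix.det_diagonal]
    simp [Fin.prod_univ_two]⟩
  map_one' := Subtype.ext (by
    show Matrix.diagonal _ = 1
    ext i j; fin_cases i <;> fin_cases j <;> simp [Matrix.diagonal, Matrix.one_apply])
  map_mul' u v := Subtype.ext (by
    show Matrix.diagonal _ = Matrix.diagonal _ * Matrix.diagonal _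
    rw [Matrix.diagonal_mul_diagonal]
    ext i j; fin_cases i <;> fin_cases j <;> simp [Matrix.diagonal, mul_comm])

private lemma SL2aux_diagHom_inj : Function.Injective (SL2aux_diagHom F) := by
  intro u v h
  have h2 := congrArg (fun s => (s : Matrix.SpecialLinearGroup (Fin 2) F).1 0 0) h
  simp only [SL2aux_diagHom, MonoidHom.coe_mk, OneHom.coe_mk] at h2
  apply Units.ext
  exact h2

end Helpers

/-- Let `q` be a prime power and `p` an odd prime dividing `|SL₂(F_q)|` with `p ∤ q`.
Then every Sylow `p`-subgroup of `SL₂(F_q)` is cyclic. -/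
theorem sl2_sylow_cyclic_of_odd_prime_not_dvd_char
    (F : Type) [Field F] [Fintype F] (p : ℕ) (hp : p.Prime) (hodd : p ≠ 2)
    (hdvd : p ∣ Nat.card (Matrix.SpecialLinearGroup (Fin 2) F))
    (hndvd : ¬ p ∣ Fintype.card F)
    (P : Sylow p (Matrix.SpecialLinearGroup (Fin 2) F)) :
    IsCyclic ↥(P : Subgroup (Matrix.SpecialLinearGroup (Fin 2) F)) := by
  classical
  haveI := Fact.mk hp
  set q := Fintype.card F with hq
  set G := Matrix.SpecialLinearGroup (Fin 2) F with hG
  haveI : Finite G := by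
    rw [hG]; infer_instance
  have hq2 : 2 ≤ q := Fintype.one_lt_card
  have hcardG : Nat.card G = q * (q - 1) * (q + 1) := SL2aux_card F
  set n := (Nat.card G).factorization p with hn
  have hGne : Nat.card G ≠ 0 := Nat.card_pos.ne'
  have hppow : p ^ n ∣ Nat.card G := Nat.ordProj_dvd _ _
  -- p divides q - 1 or q + 1, but not both
  have hcase : p ∣ (q - 1) ∨ p ∣ (q + 1) := by
    rw [hcardG] at hdvd
    rcases (hp.dvd_mul).mp hdvd with h | h
    · rcases (hp.dvd_mul).mp h with h' | h'
      · exact absurd h' hndvd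
      · exact Or.inl h'
    · exact Or.inr h
  have hnotboth : ¬ (p ∣ (q - 1) ∧ p ∣ (q + 1)) := by
    rintro ⟨h1, h2⟩
    have h3 : p ∣ 2 := by
      have := Nat.dvd_sub h2 h1
      have he : (q + 1) - (q - 1) = 2 := by omega
      rwa [he] at this
    exact hodd ((Nat.prime_dvd_prime_iff_eq hp Nat.prime_two).mp h3)
  -- an element of order p ^ n
  have hs : ∃ s : G, orderOf s = p ^ n := by
    rcases hcase with hA | hB
    · -- p ∣ q - 1 : use diagonal torus
      have hnB : ¬ p ∣ (q + 1) := fun h => hnotboth ⟨hA, h⟩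
      have hco : Nat.Coprime (p ^ n) (q * (q + 1)) :=
        (Nat.Coprime.mul_right ((hp.coprime_iff_not_dvd).mpr hndvd)
          ((hp.coprime_iff_not_dvd).mpr hnB)).pow_left n
      have hdvd1 : p ^ n ∣ (q - 1) := by
        refine hco.dvd_of_dvd_mul_right ?_
        have : Nat.card G = (q - 1) * (q * (q + 1)) := by rw [hcardG]; ring
        rwa [this] at hppow
      have hcardU : Nat.card Fˣ = q - 1 := by
        rw [Nat.card_units, Nat.card_eq_fintype_card]
      obtain ⟨u, hu⟩ := SL2aux_exists_orderOf (G := Fˣ) (d := p ^ n) (by rw [hcardU]; exact hdvd1)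
      exact ⟨SL2aux_diagHom F u, by
        rw [orderOf_injective (SL2aux_diagHom F) (SL2aux_diagHom_inj F) u, hu]⟩
    · -- p ∣ q + 1 : use nonsplit torus inside the quadratic extension
      have hnA : ¬ p ∣ (q - 1) := fun h => hnotboth ⟨h, hB⟩
      have hco : Nat.Coprime (p ^ n) (q * (q - 1)) :=
        (Nat.Coprime.mul_right ((hp.coprime_iff_not_dvd).mpr hndvd)
          ((hp.coprime_iff_not_dvd).mpr hnA)).pow_left n
      have hdvd1 : p ^ n ∣ (q + 1) := by
        refine hco.dvd_of_dvd_mul_right ?_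
        have : Nat.card G = (q + 1) * (q * (q - 1)) := by rw [hcardG]; ring
        rwa [this] at hppow
      -- the quadratic extension K
      set K := SplittingField (X ^ (q ^ 2) - X : F[X]) with hK
      haveI : Finite K := Module.finite_of_finite F
      haveI : Fintype K := Fintype.ofFinite K
      have hcardK : Fintype.card K = q ^ 2 := by
        rw [← Nat.card_eq_fintype_card]
        exact SL2aux_card_bigK F
      have hrank : Module.finrank F K = 2 := by
        have := Module.card_eq_pow_finrank (K := F) (V := K)
        rw [hcardK] at this
        exact (Nat.pow_right_injective hq2 this.symm)
      -- basis and the regular representation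
      let b : Module.Basis (Fin 2) F K := Module.finBasisOfFinrankEq F K hrank
      let ψ : K →ₐ[F] Matrix (Fin 2) (Fin 2) F :=
        (LinearMap.toMatrixAlgEquiv b).toAlgHom.comp (Algebra.lmul F K)
      have hψ : Function.Injective ψ := ψ.toRingHom.injective
      -- element of order p ^ n in Kˣ
      have hcardKu : Nat.card Kˣ = q ^ 2 - 1 := by
        rw [Nat.card_units, Nat.card_eq_fintype_card, hcardK]
      have hdvd2 : p ^ n ∣ Nat.card Kˣ := by
        rw [hcardKu]
        refine dvd_trans hdvd1 ?_
        have : q ^ 2 - 1 = (q + 1) * (q - 1) := by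
          have h1q : 1 ≤ q := by omega
          have h1qq : 1 ≤ q ^ 2 := Nat.one_le_pow 2 q (by omega)
          zify [h1q, h1qq]; ring
        rw [this]
        exact Dvd.intro _ rfl
      obtain ⟨u, hu⟩ := SL2aux_exists_orderOf (G := Kˣ) hdvd2
      -- the matrix
      set g : Matrix (Fin 2) (Fin 2) F := ψ (u : K) with hg
      have hupow : ((u : K)) ^ (p ^ n) = 1 := by
        have h5 := pow_orderOf_eq_one u
        rw [hu] at h5
        rw [← Units.val_pow_eq_pow_val, h5, Units.val_one]
      have hgpow : g ^ (p ^ n) = 1 := by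
        rw [hg, ← map_pow, hupow, _root_.map_one]
      -- determinant is 1
      have hdet1 : g.det ^ (p ^ n) = 1 := by
        rw [← Matrix.det_pow, hgpow, Matrix.det_one]
      have hdet0 : g.det ≠ 0 := by
        intro h0
        rw [h0, zero_pow (pow_ne_zero n hp.ne_zero)] at hdet1
        exact zero_ne_one hdet1
      have hdet : g.det = 1 := by
        set d : Fˣ := Units.mk0 g.det hdet0 with hd
        have h1 : orderOf d ∣ p ^ n := orderOf_dvd_of_pow_eq_one (by
          apply Units.ext
          simpa [hd] using hdet1)
        have h2 : orderOf d ∣ q - 1 := by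
          have := orderOf_dvd_natCard d
          rwa [Nat.card_units, Nat.card_eq_fintype_card, ← hq] at this
        have hco2 : Nat.Coprime (p ^ n) (q - 1) :=
          (Nat.Coprime.pow_left n ((hp.coprime_iff_not_dvd).mpr hnA))
        have : orderOf d = 1 := Nat.eq_one_of_dvd_coprimes hco2 h1 h2
        have hd1 : d = 1 := orderOf_eq_one_iff.mp this
        have := congrArg Units.val hd1
        simpa [hd] using this
      -- the element of SL₂
      let s₀ : Matrix.SpecialLinearGroup (Fin 2) F := ⟨g, hdet⟩
      refine ⟨s₀, ?_⟩
      have hiff : ∀ m : ℕ, s₀ ^ m = 1 ↔ u ^ m = 1 := by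
        intro m
        constructor
        · intro h
          have h2 : g ^ m = 1 := by
            have := congrArg (fun s : G => (s : Matrix (Fin 2) (Fin 2) F)) h
            simpa using this
          apply Units.ext
          push_cast
          apply hψ
          rw [map_pow, ← hg, h2, _root_.map_one]
        · intro h
          have h2 : ((u : K)) ^ m = 1 := by
            rw [← Units.val_pow_eq_pow_val, h, Units.val_one]
          have h3 : g ^ m = 1 := by rw [hg, ← map_pow, h2, _root_.map_one]
          apply Subtype.ext
          simpa using h3
      rw [orderOf_eq_orderOf_iff.mpr hiff, hu]
  obtain ⟨s, hs⟩ := hs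
  have hcards : Nat.card (Subgroup.zpowers s) = p ^ n := by
    rw [Nat.card_zpowers, hs]
  let P₀ : Sylow p G := Sylow.ofCard (Subgroup.zpowers s) (by rw [hcards])
  haveI : IsCyclic ↥(Subgroup.zpowers s) := ⟨⟨⟨s, Subgroup.mem_zpowers s⟩, fun x => by
    obtain ⟨k, hk⟩ := x.2
    exact ⟨k, Subtype.ext (by simpa using hk)⟩⟩⟩
  haveI : IsCyclic ↥(P₀ : Subgroup G) := by
    show IsCyclic ↥(Subgroup.zpowers s)
    infer_instance
  exact isCyclic_of_surjective (Sylow.equiv P₀ P) (Sylow.equiv P₀ P).surjective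
end

section
/- Let q be an odd prime power. Then every Sylow 2-subgroup of SL₂(F_q) contains a cyclic subgroup of index 2; in particular it contains an abelian normal subgroup of index 2. -/
open Polynomial Pointwise

section Card
variable (F : Type) [Field F] [Fintype F]
variable (F : Type) [Field F] [Fintype F]

noncomputable def sl2kerEquiv : Matrix.SpecialLinearGroup (Fin 2) F ≃* (Matrix.GeneralLinearGroup.det (n := Fin 2) (R := F)).ker where
  toFun A := ⟨Matrix.SpecialLinearGroup.toGL A, by
    ext
    simp [Matrix.SpecialLinearGroup.toGL]⟩
  invFun g := ⟨g.1.1, by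
    have := g.2
    rw [MonoidHom.mem_ker, Units.ext_iff] at this
    simpa using this⟩
  left_inv A := rfl
  right_inv g := by ext : 2; rfl
  map_mul' A B := by ext : 2; rfl

theorem det_surj : Function.Surjective (Matrix.GeneralLinearGroup.det (n := Fin 2) (R := F)) := by
  intro u
  refine ⟨Matrix.GeneralLinearGroup.mkOfDetNeZero (Matrix.diagonal ![u, 1]) ?_, ?_⟩
  · simp [Matrix.det_diagonal, Fin.prod_univ_two]
  · ext
    simp [Matrix.GeneralLinearGroup.mkOfDetNeZero, Matrix.GeneralLinearGroup.mk',
      Matrix.unitOfDetInvertible, Matrix.det_diagonal, Fin.prod_univ_two]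


theorem card_sl2' : Nat.card (Matrix.SpecialLinearGroup (Fin 2) F)
    = Fintype.card F ^ 3 - Fintype.card F := by
  set q := Fintype.card F with hq
  have h1 : 2 ≤ q := Fintype.one_lt_card
  apply Nat.eq_of_mul_eq_mul_right (show 0 < q - 1 by omega)
  obtain ⟨m, hm⟩ : ∃ m, q = m + 1 := ⟨q - 1, by omega⟩
  have hGL : Nat.card (GL (Fin 2) F) = ∏ i : Fin 2, (q ^ 2 - q ^ (i : ℕ)) :=
    Matrix.card_GL_field (n := 2)
  have hker : Nat.card (GL (Fin 2) F) =
      Nat.card Fˣ * Nat.card ((Matrix.GeneralLinearGroup.det (n := Fin 2) (R := F)).ker) := by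
    rw [Subgroup.card_eq_card_quotient_mul_card_subgroup
      (Matrix.GeneralLinearGroup.det (n := Fin 2) (R := F)).ker]
    congr 1
    exact Nat.card_congr
        (QuotientGroup.quotientKerEquivOfSurjective _ (det_surj F)).toEquiv
  have hSL : Nat.card (Matrix.SpecialLinearGroup (Fin 2) F) =
      Nat.card ((Matrix.GeneralLinearGroup.det (n := Fin 2) (R := F)).ker) :=
    Nat.card_congr (sl2kerEquiv F).toEquiv
  have hu : Nat.card Fˣ = q - 1 := by rw [Nat.card_units, Nat.card_eq_fintype_card]
  rw [hGL, hu, Fin.prod_univ_two, Fin.val_zero, Fin.val_one] at hker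
  rw [hSL, mul_comm, ← hker, hm]
  have e1 : (m+1) ^ 2 - (m+1) ^ 0 = m * (m + 2) := Nat.sub_eq_of_eq_add (by ring)
  have e2 : (m+1) ^ 2 - (m+1) ^ 1 = (m+1) * m := Nat.sub_eq_of_eq_add (by ring)
  have e3 : (m+1) ^ 3 - (m+1) = m * (m+2) * (m+1) := Nat.sub_eq_of_eq_add (by ring)
  have e4 : (m+1) - 1 = m := by omega
  rw [e1, e2, e3, e4]
  ring
end Card

section Tori
variable (F : Type) [Field F] [Fintype F]

def diagHom : Fˣ →* Matrix.SpecialLinearGroup (Fin 2) F where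
  toFun u := ⟨Matrix.diagonal ![(u : F), ((u⁻¹ : Fˣ) : F)], by
    simp [Matrix.det_diagonal, Fin.prod_univ_two, ← Units.val_mul]⟩
  map_one' := by
    ext i j
    fin_cases i <;> fin_cases j <;> simp
  map_mul' u v := Subtype.ext <| by
    show Matrix.diagonal _ = Matrix.diagonal _ * Matrix.diagonal _
    rw [Matrix.diagonal_mul_diagonal]
    congr 1
    funext k
    fin_cases k <;> simp [Matrix.diagonal, mul_comm]

theorem diagHom_injective : Function.Injective (diagHom F) := by
  intro u v h
  have := congrArg (fun A : Matrix.SpecialLinearGroup (Fin 2) F => A.val 0 0) h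
  simp [diagHom, Matrix.diagonal] at this
  exact Units.ext this

theorem split_torus : ∃ C : Subgroup (Matrix.SpecialLinearGroup (Fin 2) F),
    IsCyclic C ∧ Nat.card C = Fintype.card F - 1 := by
  refine ⟨(diagHom F).range, ?_, ?_⟩
  · exact isCyclic_of_surjective _ (diagHom F).rangeRestrict_surjective
  · rw [← Nat.card_congr (MonoidHom.ofInjective (diagHom_injective F)).toEquiv,
      Nat.card_units, Nat.card_eq_fintype_card]

theorem nonsplit_torus (hodd : Odd (Fintype.card F)) :
    ∃ C : Subgroup (Matrix.SpecialLinearGroup (Fin 2) F),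
      IsCyclic C ∧ (Fintype.card F + 1) ∣ Nat.card C := by
  classical
  have hchar : ringChar F ≠ 2 := by
    intro h
    rw [FiniteField.even_card_iff_char_two] at h
    have := Nat.odd_iff.mp hodd
    omega
  obtain ⟨δ, hδ⟩ := FiniteField.exists_nonsquare hchar
  have hirr : Irreducible (X ^ 2 - C δ) := by
    refine X_pow_sub_C_irreducible_of_prime Nat.prime_two fun b hb => hδ ⟨b, ?_⟩
    rw [← hb]; ring
  haveI : Fact (Irreducible (X ^ 2 - C δ)) := ⟨hirr⟩
  set f : F[X] := X ^ 2 - C δ with hf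
  have hfne : f ≠ 0 := hirr.ne_zero
  have hfdeg : f.natDegree = 2 := by
    rw [hf]
    compute_degree!
  set K := AdjoinRoot f with hK
  let pb : PowerBasis F K := AdjoinRoot.powerBasis hfne
  haveI : Module.Finite F K := Module.Finite.of_basis pb.basis
  haveI : Finite K := Module.finite_of_finite F
  haveI : Fintype K := Fintype.ofFinite K
  have hdim : pb.dim = 2 := hfdeg
  have hrank : Module.finrank F K = 2 := by rw [pb.finrank, hdim]
  set q := Fintype.card F with hq
  have hcardK : Fintype.card K = q ^ 2 := by rw [Module.card_eq_pow_finrank (K := F) (V := K), hrank]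
  have hcardKu : Nat.card Kˣ = q ^ 2 - 1 := by
    rw [Nat.card_units, Nat.card_eq_fintype_card, hcardK]
  -- the norm map
  let N : Kˣ →* Fˣ := Units.map (Algebra.norm F (S := K))
  have hker : (q + 1) ∣ Nat.card N.ker := by
    have h1 : Nat.card N.ker * N.ker.index = q ^ 2 - 1 := by
      rw [Subgroup.card_mul_index, hcardKu]
    have h2 : N.ker.index ∣ q - 1 := by
      rw [Subgroup.index_ker]
      have h := Subgroup.card_subgroup_dvd_card N.range
      rwa [Nat.card_units, Nat.card_eq_fintype_card (α := F)] at h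
    obtain ⟨s, hs⟩ := h2
    have hq2 : 2 ≤ q := Fintype.one_lt_card
    have hipos : 0 < N.ker.index := Nat.pos_of_ne_zero (Subgroup.index_ne_zero_of_finite)
    refine ⟨s, Nat.eq_of_mul_eq_mul_right hipos ?_⟩
    rw [h1]
    have key : ∀ n : ℕ, 2 ≤ n → n ^ 2 - 1 = (n + 1) * (n - 1) := by
      intro n hn
      obtain ⟨m, rfl⟩ : ∃ m, n = m + 2 := ⟨n - 2, by omega⟩
      have e : m + 2 - 1 = m + 1 := by omega
      rw [e]
      exact Nat.sub_eq_of_eq_add (by ring)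
    rw [key q hq2, hs]
    ring
  -- the embedding of the norm-one group into SL2
  let b : Module.Basis (Fin 2) F K := pb.basis.reindex (finCongr hdim)
  have hdet : ∀ x : N.ker, (Algebra.leftMulMatrix b ((x : Kˣ) : K)).det = 1 := by
    intro x
    rw [← Algebra.norm_eq_matrix_det b]
    have hx := x.2
    rw [MonoidHom.mem_ker] at hx
    have := congrArg Units.val hx
    simpa [N, Units.coe_map] using this
  let ψ : N.ker →* Matrix.SpecialLinearGroup (Fin 2) F :=
  { toFun := fun x => ⟨Algebra.leftMulMatrix b ((x : Kˣ) : K), hdet x⟩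
    map_one' := Subtype.ext (by simp)
    map_mul' := fun x y => Subtype.ext (by simp; rfl) }
  have hψinj : Function.Injective ψ := by
    intro x y h
    have h2 := congrArg (fun A : Matrix.SpecialLinearGroup (Fin 2) F => A.val) h
    have h3 : ((x : Kˣ) : K) = ((y : Kˣ) : K) := Algebra.leftMulMatrix_injective b h2
    exact Subtype.ext (Units.ext h3)
  haveI : IsCyclic N.ker := subgroup_units_cyclic N.ker
  refine ⟨ψ.range, isCyclic_of_surjective _ ψ.rangeRestrict_surjective, ?_⟩
  rwa [← Nat.card_congr (MonoidHom.ofInjective hψinj).toEquiv]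
end Tori


open Pointwise

theorem normal_of_index_two {G : Type*} [Group G] (H : Subgroup G) (h : H.index = 2) :
    H.Normal := by
  constructor
  intro n hn g
  rw [Subgroup.mul_mem_iff_of_index_two h, Subgroup.mul_mem_iff_of_index_two h]
  simp [hn, H.inv_mem_iff]

theorem shrink {G : Type*} [Group G] [Finite G] (C : Subgroup G) (hC : IsCyclic C) {a : ℕ}
    (h : 2 ^ a ∣ Nat.card C) : ∃ D : Subgroup G, IsCyclic D ∧ Nat.card D = 2 ^ a := by
  haveI : Fact (Nat.Prime 2) := ⟨Nat.prime_two⟩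
  obtain ⟨S, hS⟩ := Sylow.exists_subgroup_card_pow_prime (G := C) 2 h
  refine ⟨S.map C.subtype, ?_, ?_⟩
  · haveI := hC
    exact Subgroup.isCyclic_of_le (Subgroup.map_subtype_le S)
  · rw [← hS]
    exact (Nat.card_congr (S.equivMapOfInjective C.subtype C.subtype_injective).toEquiv).symm

theorem into_sylow {G : Type*} [Group G] [Finite G] (P : Sylow 2 G) {a : ℕ}
    (D : Subgroup G) (hD : IsCyclic D) (hcard : Nat.card D = 2 ^ a)
    (hP : Nat.card (P : Subgroup G) = 2 ^ (a + 1)) :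
    ∃ H : Subgroup ↥(P : Subgroup G), IsCyclic H ∧ H.index = 2 := by
  haveI : Fact (Nat.Prime 2) := ⟨Nat.prime_two⟩
  obtain ⟨Q, hQ⟩ := (IsPGroup.of_card hcard).exists_le_sylow
  obtain ⟨g, hg⟩ := MulAction.exists_smul_eq G Q P
  have hle : MulAut.conj g • D ≤ (P : Subgroup G) := by
    rw [← hg, Sylow.coe_subgroup_smul]
    exact Subgroup.pointwise_smul_le_pointwise_smul_iff.2 hQ
  have e1 : D ≃* (MulAut.conj g • D : Subgroup G) := Subgroup.equivSMul (MulAut.conj g) D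
  have e2 : ((MulAut.conj g • D : Subgroup G).subgroupOf P) ≃* (MulAut.conj g • D : Subgroup G) :=
    Subgroup.subgroupOfEquivOfLe hle
  refine ⟨(MulAut.conj g • D : Subgroup G).subgroupOf P, ?_, ?_⟩
  · haveI := hD
    haveI : IsCyclic (MulAut.conj g • D : Subgroup G) := isCyclic_of_surjective e1 e1.surjective
    exact isCyclic_of_surjective e2.symm e2.symm.surjective
  · have h1 : Nat.card ((MulAut.conj g • D : Subgroup G).subgroupOf P) = 2 ^ a := by
      rw [Nat.card_congr e2.toEquiv, ← Nat.card_congr e1.toEquiv, hcard]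
    have h2 := Subgroup.card_mul_index ((MulAut.conj g • D : Subgroup G).subgroupOf P)
    rw [h1, hP, pow_succ] at h2
    exact Nat.eq_of_mul_eq_mul_left (by positivity) h2

theorem v2_odd (t : ℕ) (h : Odd t) : t.factorization 2 = 0 :=
  Nat.factorization_eq_zero_of_not_dvd (by rw [Nat.two_dvd_ne_zero, Nat.odd_iff.mp h])

theorem v2_two_mul_odd {n : ℕ} (h : n % 4 = 2) : n.factorization 2 = 1 := by
  obtain ⟨t, rfl⟩ : ∃ t, n = 2 * t := ⟨n / 2, by omega⟩
  have ht : Odd t := by rw [Nat.odd_iff]; omega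
  rw [Nat.factorization_mul (by norm_num) (by rintro rfl; omega)]
  simp [v2_odd t ht, Nat.Prime.factorization_self Nat.prime_two]

theorem arith2 {q : ℕ} (hq : Odd q) (h3 : 3 ≤ q) :
    ∃ a : ℕ, (q ^ 3 - q).factorization 2 = a + 1 ∧ (2 ^ a ∣ q - 1 ∨ 2 ^ a ∣ q + 1) := by
  have hsplit : q ^ 3 - q = q * ((q - 1) * (q + 1)) := by
    obtain ⟨m, rfl⟩ : ∃ m, q = m + 1 := ⟨q - 1, by omega⟩
    simp only [Nat.add_sub_cancel]
    exact Nat.sub_eq_of_eq_add (by ring)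
  have hm1 : q - 1 ≠ 0 := by omega
  have hp1 : q + 1 ≠ 0 := by omega
  have hv : (q ^ 3 - q).factorization 2 =
      (q - 1).factorization 2 + (q + 1).factorization 2 := by
    rw [hsplit, Nat.factorization_mul (by omega) (mul_ne_zero hm1 hp1),
      Nat.factorization_mul hm1 hp1]
    simp [v2_odd q hq]
  have hq4 := Nat.odd_iff.mp hq
  rcases Nat.even_or_odd (q / 2) with he | ho
  · -- q % 4 = 1, so v2 (q+1) = 1
    have h1 : (q + 1) % 4 = 2 := by
      rcases Nat.even_iff.mp he with h'
      omega
    refine ⟨(q - 1).factorization 2, by rw [hv, v2_two_mul_odd h1], Or.inl (Nat.ordProj_dvd _ 2)⟩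
  · have h1 : (q - 1) % 4 = 2 := by
      rcases Nat.odd_iff.mp ho with h'
      omega
    refine ⟨(q + 1).factorization 2, by rw [hv, v2_two_mul_odd h1]; ring, Or.inr (Nat.ordProj_dvd _ 2)⟩

/-- Let `q` be an odd prime power.  Then every Sylow `2`-subgroup of `SL₂(F_q)` contains a
cyclic subgroup of index `2`; in particular it contains an abelian normal subgroup of
index `2`. -/
theorem sl2_sylow_two_has_cyclic_subgroup_of_index_two
    (F : Type) [Field F] [Fintype F] (hodd : Odd (Fintype.card F))
    (P : Sylow 2 (Matrix.SpecialLinearGroup (Fin 2) F)) :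
    (∃ H : Subgroup ↥(P : Subgroup (Matrix.SpecialLinearGroup (Fin 2) F)),
        IsCyclic ↥H ∧ H.index = 2) ∧
    (∃ K : Subgroup ↥(P : Subgroup (Matrix.SpecialLinearGroup (Fin 2) F)),
        (∀ x ∈ K, ∀ y ∈ K, x * y = y * x) ∧ K.Normal ∧ K.index = 2) := by
  classical
  haveI : Fact (Nat.Prime 2) := ⟨Nat.prime_two⟩
  set G := Matrix.SpecialLinearGroup (Fin 2) F with hG
  haveI : Finite G := by
    have : Finite (Matrix (Fin 2) (Fin 2) F) := by infer_instance
    exact Subtype.finite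
  set q := Fintype.card F with hq
  have h3 : 3 ≤ q := by
    have h2 : 2 ≤ q := Fintype.one_lt_card
    have := Nat.odd_iff.mp hodd
    omega
  obtain ⟨a, ha1, ha2⟩ := arith2 hodd h3
  have hcardP : Nat.card ↥(P : Subgroup G) = 2 ^ (a + 1) := by
    have hm := Sylow.card_eq_multiplicity P
    rwa [card_sl2', ← hq, ha1] at hm
  have hmain : ∃ H : Subgroup ↥(P : Subgroup G), IsCyclic ↥H ∧ H.index = 2 := by
    have hstep : ∃ C : Subgroup G, IsCyclic C ∧ 2 ^ a ∣ Nat.card C := by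
      rcases ha2 with h | h
      · obtain ⟨C, hC1, hC2⟩ := split_torus F
        exact ⟨C, hC1, hC2 ▸ h⟩
      · obtain ⟨C, hC1, hC2⟩ := nonsplit_torus F hodd
        exact ⟨C, hC1, dvd_trans h hC2⟩
    obtain ⟨C, hC1, hC2⟩ := hstep
    obtain ⟨D, hD1, hD2⟩ := shrink C hC1 hC2
    exact into_sylow P D hD1 hD2 hcardP
  obtain ⟨H, hH1, hH2⟩ := hmain
  refine ⟨⟨H, hH1, hH2⟩, ⟨H, ?_, normal_of_index_two H hH2, hH2⟩⟩
  intro x hx y hy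
  letI := hH1.commGroup
  have := mul_comm (⟨x, hx⟩ : ↥H) (⟨y, hy⟩ : ↥H)
  exact congrArg Subtype.val this
end
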